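/- With the setup of a quadratic Lie 2-algebroid in split form, for any other choice of bundle map γ': ∧²TM → 𝒢* (keeping σ fixed), writing γ' = γ + δ for some δ ∈ Γ(Hom(∧²TM, 𝒢*)), one has R_{γ'} = R_γ + 𝔩_1∘δ and I_{γ'} = I_γ + d_{∇¹}δ, and 𝒮(R_{γ'}, I_{γ'}) = 𝒮(R_γ, I_γ) + d( 𝒮(R_γ, δ) + (1/2)𝒮(𝔩_1∘δ, δ) ). Hence the cohomology class [𝒮(R_γ, I_γ)] ∈ H^5(M) does not depend on the choice of γ. -/
import Mathlib
set_option maxHeartbeats 4000000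


/-- Exterior differential of a scalar `k`-form with respect to the action `nab` of vector
fields on functions. -/
def dNab {V E : Type*} [LieRing V] [AddCommGroup E]
    (nab : V → E → E) {k : ℕ} (θ : (Fin k → V) → E) :
    (Fin (k + 1) → V) → E :=
  fun Xs =>
    (∑ i : Fin (k + 1), ((-1 : ℤ) ^ (i : ℕ)) • nab (Xs i) (θ (Xs ∘ i.succAbove)))
      + ∑ i : Fin (k + 1), ∑ j : Fin (k + 1),
          if h : (i : ℕ) < (j : ℕ) then
            ((-1 : ℤ) ^ (j : ℕ)) • θ (Function.update (Xs ∘ j.succAbove)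
              ⟨(i : ℕ), by have hj := j.isLt; omega⟩ ⁅Xs i, Xs j⁆)
          else 0

/-- changing `γ` to `γ' = γ + δ` changes the curvatures by
`R_{γ'} = R_γ + 𝔩₁∘δ`, `I_{γ'} = I_γ + d_{∇¹}δ`, and
`𝒮(R_{γ'}, I_{γ'}) = 𝒮(R_γ, I_γ) + d(𝒮(R_γ, δ) + (1/2)𝒮(𝔩₁∘δ, δ))`; hence the class
`[𝒮(R_γ, I_γ)] ∈ H⁵(M)` does not depend on the choice of `γ`. -/
theorem first_pontryagin_form_independent_of_gamma
    (V R G Gs : Type) [LieRing V]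
    [AddCommGroup R] [Module ℝ R] [AddCommGroup G] [AddCommGroup Gs]
    (act : V → R → R)
    (hact_add : ∀ (X : V) (f g : R), act X (f + g) = act X f + act X g)
    (hact_bracket : ∀ (X Y : V) (f : R), act ⁅X, Y⁆ f = act X (act Y f) - act Y (act X f))
    (pair : G → Gs → R)
    (hpair_addl : ∀ (u v : G) (m : Gs), pair (u + v) m = pair u m + pair v m)
    (hpair_addr : ∀ (u : G) (m p : Gs), pair u (m + p) = pair u m + pair u p)
    (nab0 : V → G → G) (nab1 : V → Gs → Gs)
    (hnab0_add : ∀ (X : V) (u v : G), nab0 X (u + v) = nab0 X u + nab0 X v)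
    (hnab1_add : ∀ (X : V) (m p : Gs), nab1 X (m + p) = nab1 X m + nab1 X p)
    (hdual : ∀ (X : V) (u : G) (m : Gs),
      act X (pair u m) = pair (nab0 X u) m + pair u (nab1 X m))
    (l1 : Gs → G)
    (hl1_add : ∀ m p : Gs, l1 (m + p) = l1 m + l1 p)
    (hpair_l1 : ∀ m p : Gs, pair (l1 m) p = pair (l1 p) m)
    -- compatibility 𝔩₁ ∘ ∇¹ = ∇⁰ ∘ 𝔩₁
    (hcompat : ∀ (X : V) (m : Gs), l1 (nab1 X m) = nab0 X (l1 m))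
    -- curvatures for the splitting (σ, γ)
    (Rg : V → V → G)
    (hRg_skew : ∀ X Y : V, Rg X Y = - Rg Y X)
    (Ig : V → V → V → Gs)
    (hIg_skew1 : ∀ X Y Z : V, Ig X Y Z = - Ig Y X Z)
    (hIg_skew2 : ∀ X Y Z : V, Ig X Y Z = - Ig X Z Y)
    -- Bianchi identity d_{∇⁰}R_γ = 𝔩₁ I_γ
    (hBianchi : ∀ X Y Z : V,
      nab0 X (Rg Y Z) - nab0 Y (Rg X Z) + nab0 Z (Rg X Y)
        - Rg ⁅X, Y⁆ Z + Rg ⁅X, Z⁆ Y - Rg ⁅Y, Z⁆ X = l1 (Ig X Y Z))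
    -- the change δ = γ' − γ of the bundle map γ
    (δ : V → V → Gs)
    (hδ_skew : ∀ X Y : V, δ X Y = - δ Y X)
    -- curvatures for the splitting (σ, γ') :  R_{γ'} = R_γ + 𝔩₁∘δ,  I_{γ'} = I_γ + d_{∇¹}δ
    (Rg' : V → V → G)
    (hRg' : ∀ X Y : V, Rg' X Y = Rg X Y + l1 (δ X Y))
    (Ig' : V → V → V → Gs)
    (hIg' : ∀ X Y Z : V, Ig' X Y Z = Ig X Y Z
      + (nab1 X (δ Y Z) - nab1 Y (δ X Z) + nab1 Z (δ X Y)
          - δ ⁅X, Y⁆ Z + δ ⁅X, Z⁆ Y - δ ⁅Y, Z⁆ X))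
    -- the 5-forms 𝒮(R_γ, I_γ) and 𝒮(R_{γ'}, I_{γ'})
    (P5 P5' : (Fin 5 → V) → R)
    (hP5 : ∀ Xs : Fin 5 → V, P5 Xs =
      pair (Rg (Xs 0) (Xs 1)) (Ig (Xs 2) (Xs 3) (Xs 4))
        - pair (Rg (Xs 0) (Xs 2)) (Ig (Xs 1) (Xs 3) (Xs 4))
        + pair (Rg (Xs 0) (Xs 3)) (Ig (Xs 1) (Xs 2) (Xs 4))
        - pair (Rg (Xs 0) (Xs 4)) (Ig (Xs 1) (Xs 2) (Xs 3))
        + pair (Rg (Xs 1) (Xs 2)) (Ig (Xs 0) (Xs 3) (Xs 4))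
        - pair (Rg (Xs 1) (Xs 3)) (Ig (Xs 0) (Xs 2) (Xs 4))
        + pair (Rg (Xs 1) (Xs 4)) (Ig (Xs 0) (Xs 2) (Xs 3))
        + pair (Rg (Xs 2) (Xs 3)) (Ig (Xs 0) (Xs 1) (Xs 4))
        - pair (Rg (Xs 2) (Xs 4)) (Ig (Xs 0) (Xs 1) (Xs 3))
        + pair (Rg (Xs 3) (Xs 4)) (Ig (Xs 0) (Xs 1) (Xs 2)))
    (hP5' : ∀ Xs : Fin 5 → V, P5' Xs =
      pair (Rg' (Xs 0) (Xs 1)) (Ig' (Xs 2) (Xs 3) (Xs 4))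
        - pair (Rg' (Xs 0) (Xs 2)) (Ig' (Xs 1) (Xs 3) (Xs 4))
        + pair (Rg' (Xs 0) (Xs 3)) (Ig' (Xs 1) (Xs 2) (Xs 4))
        - pair (Rg' (Xs 0) (Xs 4)) (Ig' (Xs 1) (Xs 2) (Xs 3))
        + pair (Rg' (Xs 1) (Xs 2)) (Ig' (Xs 0) (Xs 3) (Xs 4))
        - pair (Rg' (Xs 1) (Xs 3)) (Ig' (Xs 0) (Xs 2) (Xs 4))
        + pair (Rg' (Xs 1) (Xs 4)) (Ig' (Xs 0) (Xs 2) (Xs 3))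
        + pair (Rg' (Xs 2) (Xs 3)) (Ig' (Xs 0) (Xs 1) (Xs 4))
        - pair (Rg' (Xs 2) (Xs 4)) (Ig' (Xs 0) (Xs 1) (Xs 3))
        + pair (Rg' (Xs 3) (Xs 4)) (Ig' (Xs 0) (Xs 1) (Xs 2)))
    -- the primitive 4-form 𝒮(R_γ, δ) + (1/2)𝒮(𝔩₁∘δ, δ)
    (C4 : (Fin 4 → V) → R)
    (hC4 : ∀ Xs : Fin 4 → V, C4 Xs =
      (pair (Rg (Xs 0) (Xs 1)) (δ (Xs 2) (Xs 3))
        - pair (Rg (Xs 0) (Xs 2)) (δ (Xs 1) (Xs 3))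
        + pair (Rg (Xs 0) (Xs 3)) (δ (Xs 1) (Xs 2))
        + pair (Rg (Xs 1) (Xs 2)) (δ (Xs 0) (Xs 3))
        - pair (Rg (Xs 1) (Xs 3)) (δ (Xs 0) (Xs 2))
        + pair (Rg (Xs 2) (Xs 3)) (δ (Xs 0) (Xs 1)))
      + ((1 : ℝ) / 2) •
        (pair (l1 (δ (Xs 0) (Xs 1))) (δ (Xs 2) (Xs 3))
          - pair (l1 (δ (Xs 0) (Xs 2))) (δ (Xs 1) (Xs 3))
          + pair (l1 (δ (Xs 0) (Xs 3))) (δ (Xs 1) (Xs 2))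
          + pair (l1 (δ (Xs 1) (Xs 2))) (δ (Xs 0) (Xs 3))
          - pair (l1 (δ (Xs 1) (Xs 3))) (δ (Xs 0) (Xs 2))
          + pair (l1 (δ (Xs 2) (Xs 3))) (δ (Xs 0) (Xs 1)))) :
    -- 𝒮(R_{γ'}, I_{γ'}) = 𝒮(R_γ, I_γ) + d(𝒮(R_γ, δ) + (1/2)𝒮(𝔩₁∘δ, δ))
    ∀ Xs : Fin 5 → V, P5' Xs = P5 Xs + dNab act C4 Xs := by
  -- basic derived linearity lemmas
  have pair_zl : ∀ m : Gs, pair 0 m = 0 := by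
    intro m
    have h := hpair_addl 0 0 m
    rw [add_zero] at h
    exact (add_left_cancel (a := pair (0:G) m) (b := (0:R)) (by rw [add_zero]; exact h)).symm
  have pair_zr : ∀ u : G, pair u 0 = 0 := by
    intro u
    have h := hpair_addr u 0 0
    rw [add_zero] at h
    exact (add_left_cancel (a := pair u (0:Gs)) (b := (0:R)) (by rw [add_zero]; exact h)).symm
  have pair_negl : ∀ (u : G) (m : Gs), pair (-u) m = - pair u m := by
    intro u m
    have h := hpair_addl u (-u) m
    rw [add_neg_cancel, pair_zl] at h
    exact eq_neg_of_add_eq_zero_right h.symm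
  have pair_negr : ∀ (u : G) (m : Gs), pair u (-m) = - pair u m := by
    intro u m
    have h := hpair_addr u m (-m)
    rw [add_neg_cancel, pair_zr] at h
    exact eq_neg_of_add_eq_zero_right h.symm
  have pair_subl : ∀ (u v : G) (m : Gs), pair (u - v) m = pair u m - pair v m := by
    intro u v m
    rw [sub_eq_add_neg, hpair_addl, pair_negl, sub_eq_add_neg]
  have pair_subr : ∀ (u : G) (m p : Gs), pair u (m - p) = pair u m - pair u p := by
    intro u m p
    rw [sub_eq_add_neg, hpair_addr, pair_negr, sub_eq_add_neg]
  have act_zero : ∀ X : V, act X 0 = 0 := by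
    intro X
    have h := hact_add X 0 0
    rw [add_zero] at h
    exact (add_left_cancel (a := act X (0:R)) (b := (0:R)) (by rw [add_zero]; exact h)).symm
  have act_neg : ∀ (X : V) (f : R), act X (-f) = - act X f := by
    intro X f
    have h := hact_add X f (-f)
    rw [add_neg_cancel, act_zero] at h
    exact eq_neg_of_add_eq_zero_right h.symm
  have act_sub : ∀ (X : V) (f g : R), act X (f - g) = act X f - act X g := by
    intro X f g
    rw [sub_eq_add_neg, hact_add, act_neg, sub_eq_add_neg]
  have act_half : ∀ (X : V) (f : R), act X (((1:ℝ)/2) • f) = ((1:ℝ)/2) • act X f := by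
    intro X f
    have h2 : ((1:ℝ)/2) • f + ((1:ℝ)/2) • f = f := by
      rw [← add_smul]; norm_num
    have hz : act X (((1:ℝ)/2) • f) + act X (((1:ℝ)/2) • f) = act X f := by
      rw [← hact_add, h2]
    calc act X (((1:ℝ)/2) • f)
        = ((1:ℝ)/2) • (act X (((1:ℝ)/2) • f) + act X (((1:ℝ)/2) • f)) := by
          rw [← two_smul ℝ, smul_smul]; norm_num
      _ = ((1:ℝ)/2) • act X f := by rw [hz]
  have l1_zero : l1 0 = 0 := by
    have h := hl1_add 0 0
    rw [add_zero] at h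
    exact (add_left_cancel (a := l1 (0:Gs)) (b := (0:G)) (by rw [add_zero]; exact h)).symm
  have l1_neg : ∀ m : Gs, l1 (-m) = - l1 m := by
    intro m
    have h := hl1_add m (-m)
    rw [add_neg_cancel, l1_zero] at h
    exact eq_neg_of_add_eq_zero_right h.symm
  have hcompat' : ∀ (X : V) (m : Gs), nab0 X (l1 m) = l1 (nab1 X m) := by
    intro X m; exact (hcompat X m).symm
  have sR : ∀ (a x y : V), Rg a ⁅x, y⁆ = - Rg ⁅x, y⁆ a := fun a x y => hRg_skew a ⁅x, y⁆
  have sd : ∀ (a x y : V), δ a ⁅x, y⁆ = - δ ⁅x, y⁆ a := fun a x y => hδ_skew a ⁅x, y⁆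
  have n2 : ∀ (X : V) (m p : Gs), pair (l1 (nab1 X m)) p = pair (l1 p) (nab1 X m) :=
    fun X m p => hpair_l1 (nab1 X m) p
  have n3 : ∀ (x y c : V) (p : Gs), pair (l1 (δ ⁅x, y⁆ c)) p = pair (l1 p) (δ ⁅x, y⁆ c) :=
    fun x y c p => hpair_l1 (δ ⁅x, y⁆ c) p
  have n1 : ∀ a b c d e : V, pair (l1 (δ a b)) (Ig c d e) =
      pair (nab0 c (Rg d e)) (δ a b) - pair (nab0 d (Rg c e)) (δ a b)
        + pair (nab0 e (Rg c d)) (δ a b) - pair (Rg ⁅c, d⁆ e) (δ a b)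
        + pair (Rg ⁅c, e⁆ d) (δ a b) - pair (Rg ⁅d, e⁆ c) (δ a b) := by
    intro a b c d e
    rw [hpair_l1, ← hBianchi]
    simp only [pair_subl, hpair_addl]
  intro Xs
  rw [hP5' Xs, hP5 Xs]
  simp only [hRg', hIg', dNab, hC4, Fin.sum_univ_succ, Fin.sum_univ_zero,
    Function.comp_apply, Fin.succAbove, Function.update]
  norm_num [Fin.lt_def, Fin.ext_iff,
    show ((0:Fin 4):ℕ) = 0 from rfl, show ((1:Fin 4):ℕ) = 1 from rfl,
    show ((2:Fin 4):ℕ) = 2 from rfl, show ((3:Fin 4):ℕ) = 3 from rfl,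
    show ((0:Fin 5):ℕ) = 0 from rfl, show ((1:Fin 5):ℕ) = 1 from rfl,
    show ((2:Fin 5):ℕ) = 2 from rfl, show ((3:Fin 5):ℕ) = 3 from rfl,
    show ((4:Fin 5):ℕ) = 4 from rfl,
    show ((0:Fin 3):ℕ) = 0 from rfl, show ((1:Fin 3):ℕ) = 1 from rfl,
    show ((2:Fin 3):ℕ) = 2 from rfl]
  simp only [show Fin.succ (0:Fin 4) = (1:Fin 5) from rfl,
    show Fin.succ (1:Fin 4) = (2:Fin 5) from rfl,
    show Fin.succ (2:Fin 4) = (3:Fin 5) from rfl,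
    show Fin.succ (3:Fin 4) = (4:Fin 5) from rfl,
    show Fin.succ (Fin.succ (2:Fin 3)) = (4:Fin 5) from rfl,
    show Fin.castSucc (0:Fin 4) = (0:Fin 5) from rfl,
    show Fin.castSucc (1:Fin 4) = (1:Fin 5) from rfl,
    show Fin.castSucc (2:Fin 4) = (2:Fin 5) from rfl,
    show Fin.castSucc (3:Fin 4) = (3:Fin 5) from rfl]
  simp only [hact_add, act_sub, act_half, hdual]
  simp only [hcompat', sR, sd, l1_neg, pair_negl, pair_negr, n2, n3, n1,
    pair_subl, pair_subr, hpair_addl, hpair_addr]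
  simp only [neg_smul, one_smul, smul_add, smul_sub, smul_neg]
  module
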